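/- For every function ω of class K∞ there exist functions σ₁, σ₂ of class K∞ such that ω(r·s) ≤ σ₁(r)·σ₂(s) for all r, s ≥ 0. -/

import Mathlib

open Metric Set Filter Topology MeasureTheory Pointwise
open scoped RealInnerProductSpace

noncomputable section

/-- Euclidean space `ℝⁿ`. -/
abbrev Euc (n : ℕ) := EuclideanSpace ℝ (Fin n)

/-- Continuous linear operators on `ℝⁿ` (playing the role of `n × n` matrices). -/
abbrev EucOp (n : ℕ) := Euc n →L[ℝ] Euc n

variable {n : ℕ}

/-- The set of nearest points of `C` to `x` (the Euclidean projection `P_C(x)`). -/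
def projSet (C : Set (Euc n)) (x : Euc n) : Set (Euc n) :=
  {c | c ∈ C ∧ dist x c = Metric.infDist x C}

/-- The (Bouligand) tangent cone to `C` at `x`, via sequences:
`v = lim (xk - x)/δk` with `xk ∈ C`, `xk → x`, `δk → 0⁺`. -/
def tanCone (C : Set (Euc n)) (x : Euc n) : Set (Euc n) :=
  {v | ∃ (xk : ℕ → Euc n) (δk : ℕ → ℝ),
    (∀ k, xk k ∈ C) ∧ Filter.Tendsto xk Filter.atTop (nhds x) ∧
    (∀ k, 0 < δk k) ∧ Filter.Tendsto δk Filter.atTop (nhds 0) ∧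
    Filter.Tendsto (fun k => (δk k)⁻¹ • (xk k - x)) Filter.atTop (nhds v)}

/-- Clarke regularity: sequential inner semicontinuity of the tangent-cone map on `C`. -/
def ClarkeRegular (C : Set (Euc n)) : Prop :=
  ∀ x ∈ C, ∀ v ∈ tanCone C x, ∀ xk : ℕ → Euc n,
    (∀ k, xk k ∈ C) → Filter.Tendsto xk Filter.atTop (nhds x) →
    ∃ vk : ℕ → Euc n, (∀ k, vk k ∈ tanCone C (xk k)) ∧
      Filter.Tendsto vk Filter.atTop (nhds v)

/-- The Euclidean normal cone `N_xC`, the polar of the tangent cone. -/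
def normalCone (C : Set (Euc n)) (x : Euc n) : Set (Euc n) :=
  {η | ∀ v ∈ tanCone C x, ⟪η, v⟫ ≤ 0}

/-- `C` is `α`-prox-regular at `x`: every normal vector at `x` is `α`-proximal. -/
def ProxRegularAt (C : Set (Euc n)) (α : ℝ) (x : Euc n) : Prop :=
  ∀ η ∈ normalCone C x, ∀ y ∈ C, ⟪η, y - x⟫ ≤ α * ‖η‖ * ‖y - x‖ ^ 2

/-- `C` is `α`-prox-regular: Clarke regular and `α`-prox-regular at every point. -/
def ProxRegular (C : Set (Euc n)) (α : ℝ) : Prop :=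
  ClarkeRegular C ∧ ∀ x ∈ C, ProxRegularAt C α x

/-- `G` is a (continuous) metric on `C`: continuous, symmetric, positive definite. -/
def IsMetricOn (C : Set (Euc n)) (G : Euc n → EucOp n) : Prop :=
  ContinuousOn G C ∧
    ∀ x ∈ C, (∀ u v : Euc n, ⟪G x u, v⟫ = ⟪u, G x v⟫) ∧
      ∀ u : Euc n, u ≠ 0 → 0 < ⟪u, G x u⟫

/-- The inner product `⟨u, v⟩_{G(x)} := uᵀ G(x) v` induced by an operator `Gx`. -/
def innerG (Gx : EucOp n) (u v : Euc n) : ℝ := ⟪u, Gx v⟫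

/-- The norm `‖u‖_{G(x)}` induced by an operator `Gx`. -/
def normG (Gx : EucOp n) (u : Euc n) : ℝ := Real.sqrt (innerG Gx u u)

/-- The `G`-normal cone `N^G_xC`. -/
def normalConeG (C : Set (Euc n)) (G : Euc n → EucOp n) (x : Euc n) : Set (Euc n) :=
  {η | ∀ v ∈ tanCone C x, innerG (G x) η v ≤ 0}

/-- The projection `Π^G_C[w](x)`: minimizers of `‖v - w‖_{G(x)}` over the tangent cone. -/
def projTanG (C : Set (Euc n)) (G : Euc n → EucOp n) (w x : Euc n) : Set (Euc n) :=
  {v | v ∈ tanCone C x ∧ ∀ u ∈ tanCone C x, normG (G x) (v - w) ≤ normG (G x) (u - w)}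

/-- The Euclidean projection onto the tangent cone, `Π_C[w](x)` (identity metric). -/
def projTanI (C : Set (Euc n)) (w x : Euc n) : Set (Euc n) :=
  {v | v ∈ tanCone C x ∧ ∀ u ∈ tanCone C x, ‖v - w‖ ≤ ‖u - w‖}

/-- `z` is a Carathéodory solution of `ż ∈ H(z)`, `z ∈ C`, on `[0,T]`, with (a.e.)
derivative `v`: absolute continuity is encoded by the integral representation. -/
def SolutionVia (H : Euc n → Set (Euc n)) (C : Set (Euc n)) (T : ℝ)
    (z v : ℝ → Euc n) : Prop :=
  (∀ t ∈ Set.Icc (0:ℝ) T, z t ∈ C) ∧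
  MeasureTheory.IntegrableOn v (Set.Icc (0:ℝ) T) ∧
  (∀ᵐ t ∂(MeasureTheory.volume.restrict (Set.Icc (0:ℝ) T)), v t ∈ H (z t)) ∧
  (∀ t ∈ Set.Icc (0:ℝ) T, z t = z 0 + ∫ s in (0:ℝ)..t, v s)

/-- `z` is a Carathéodory solution of `ż ∈ H(z)`, `z ∈ C`, on `[0,T]`. -/
def IsSolutionOn (H : Euc n → Set (Euc n)) (C : Set (Euc n)) (T : ℝ)
    (z : ℝ → Euc n) : Prop :=
  ∃ v : ℝ → Euc n, SolutionVia H C T z v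

/-- `z : [0,T'] → ℝⁿ` is a `(T, ε)`-truncated solution of `ż ∈ H(z)`, `z ∈ C`,
with initial condition `z₀`. -/
def IsTruncSol (H : Euc n → Set (Euc n)) (C : Set (Euc n)) (T ε : ℝ) (z₀ : Euc n)
    (T' : ℝ) (z : ℝ → Euc n) : Prop :=
  0 ≤ T' ∧ T' ≤ T ∧ IsSolutionOn H C T' z ∧ z 0 = z₀ ∧
  (∀ t ∈ Set.Icc (0:ℝ) T', ‖z t - z₀‖ ≤ ε) ∧ (T' = T ∨ ‖z T' - z₀‖ = ε)

/-- A complete solution: a solution on every compact interval `[0,T]`. -/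
def IsCompleteSol (H : Euc n → Set (Euc n)) (C : Set (Euc n)) (z : ℝ → Euc n) : Prop :=
  ∀ T : ℝ, 0 ≤ T → IsSolutionOn H C T z

/-- The graph of a map defined on `[0,T']`, as a subset of `ℝ × ℝⁿ`. -/
def graphOn (T' : ℝ) (z : ℝ → Euc n) : Set (ℝ × Euc n) :=
  {p | p.1 ∈ Set.Icc (0:ℝ) T' ∧ p.2 = z p.1}

/-- Painlevé–Kuratowski convergence of a sequence of sets to `L`:
`L` is contained in the inner limit and contains the outer limit. -/
def KuratowskiTendsto {X : Type*} [TopologicalSpace X] (A : ℕ → Set X) (L : Set X) : Prop :=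
  (∀ x ∈ L, ∀ U ∈ nhds x, ∀ᶠ i in Filter.atTop, (A i ∩ U).Nonempty) ∧
  (∀ x : X, (∀ U ∈ nhds x, ∃ᶠ i in Filter.atTop, (A i ∩ U).Nonempty) → x ∈ L)

/-- The enlarged set `Z°_α := Z + (1/(2α))·int 𝔹` on which the projection is single-valued. -/
def ZballSet (Z : Set (Euc n)) (α : ℝ) : Set (Euc n) :=
  Z + Metric.ball (0 : Euc n) (1 / (2 * α))

/-- The anti-windup approximation vector field
`F_K(z) = f(z, P_Z(z)) − (1/K)·G⁻¹(P_Z(z))(z − P_Z(z))`, as a set-valued map. -/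
def AWA (f : Euc n → Euc n → Euc n) (Ginv : Euc n → EucOp n) (Z : Set (Euc n)) (K : ℝ)
    (z : Euc n) : Set (Euc n) :=
  (fun zb => f z zb - K⁻¹ • Ginv zb (z - zb)) '' projSet Z z

/-- The special anti-windup vector field `F_K(z) = f(P_Z(z)) − (1/K)·G⁻¹(P_Z(z))(z − P_Z(z))`. -/
def AWAspec (f : Euc n → Euc n) (Ginv : Euc n → EucOp n) (Z : Set (Euc n)) (K : ℝ)
    (z : Euc n) : Set (Euc n) :=
  (fun zb => f zb - K⁻¹ • Ginv zb (z - zb)) '' projSet Z z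

/-- `Ginv` is a pointwise (two-sided) inverse of `G` on `Z`. -/
def InverseOn (G Ginv : Euc n → EucOp n) (Z : Set (Euc n)) : Prop :=
  ∀ x ∈ Z, (∀ u : Euc n, G x (Ginv x u) = u) ∧ (∀ u : Euc n, Ginv x (G x u) = u)

/-- A function of class `K∞` on `[0,∞)`. -/
def ClassKInf (ω : ℝ → ℝ) : Prop :=
  ContinuousOn ω (Set.Ici (0:ℝ)) ∧ StrictMonoOn ω (Set.Ici (0:ℝ)) ∧
  (∀ M : ℝ, ∃ r : ℝ, 0 ≤ r ∧ M ≤ ω r) ∧ ω 0 = 0 ∧ ∀ r : ℝ, 0 ≤ r → 0 ≤ ω r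

/-- A function of class `KL` on `[0,∞)²`. -/
def ClassKL (β : ℝ → ℝ → ℝ) : Prop :=
  (∀ r s : ℝ, 0 ≤ r → 0 ≤ s → 0 ≤ β r s) ∧
  (∀ s : ℝ, 0 ≤ s → MonotoneOn (fun r => β r s) (Set.Ici (0:ℝ))) ∧
  (∀ r : ℝ, 0 ≤ r → AntitoneOn (β r) (Set.Ici (0:ℝ))) ∧
  (∀ s : ℝ, 0 ≤ s → Filter.Tendsto (fun r => β r s) (nhdsWithin 0 (Set.Ioi 0)) (nhds 0)) ∧
  (∀ r : ℝ, 0 ≤ r → Filter.Tendsto (β r) Filter.atTop (nhds 0))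

/-- The local assumption (Assumption 3.3) at `z₀ ∈ Z` with constants `M, ν, μ, α, ε`. -/
def LocalAssumption (Z : Set (Euc n)) (f : Euc n → Euc n → Euc n) (Ginv : Euc n → EucOp n)
    (z₀ : Euc n) (M ν μ α ε : ℝ) : Prop :=
  (0 < M ∧ 0 < ν ∧ 0 < μ ∧ 0 < α ∧ 0 < ε) ∧
  (∀ z ∈ Metric.closedBall z₀ ε ∩ ZballSet Z α, ∀ zb ∈ projSet Z z, ‖f z zb‖ ≤ M) ∧
  (∀ z ∈ Metric.closedBall z₀ ε ∩ ZballSet Z α, ∀ zb ∈ projSet Z z, ∀ u : Euc n,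
    μ * ‖u‖ ^ 2 ≤ ⟪u, Ginv zb u⟫ ∧ ⟪u, Ginv zb u⟫ ≤ ν * ‖u‖ ^ 2) ∧
  (∀ x ∈ Metric.closedBall z₀ ε ∩ Z, ProxRegularAt Z α x)

/-- The alternate-form vector field `F̂(z) = f(z, P_Z(z)) − N^G_zZ ∩ γ𝔹` (for `z ∈ Z`). -/
def FhatMap (f : Euc n → Euc n → Euc n) (G : Euc n → EucOp n) (Z : Set (Euc n)) (γ : ℝ)
    (z : Euc n) : Set (Euc n) :=
  (fun η => f z z - η) '' {η | η ∈ normalConeG Z G z ∧ ‖η‖ ≤ γ}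

/-- The `σ`-perturbation `H_σ(x) := cl co H((x + σ𝔹) ∩ C) + σ𝔹` of a set-valued map. -/
def perturbMap (H : Euc n → Set (Euc n)) (C : Set (Euc n)) (σ : ℝ) (x : Euc n) :
    Set (Euc n) :=
  closure (convexHull ℝ (⋃ y ∈ Metric.closedBall x σ ∩ C, H y)) +
    Metric.closedBall (0 : Euc n) σ

end

noncomputable section Stmt4Aux

namespace Stmt4Aux

open Real Filter Set

variable (ω : ℝ → ℝ)

/-- `H(u) = log ω(eᵘ)`. -/
def Hf (u : ℝ) : ℝ := Real.log (ω (Real.exp u))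

/-- Slopes for the affine pieces. -/
def tf (k : ℤ) : ℝ := Real.exp k * (1 + max 0 (Hf ω (k + 2)))

/-- Affine pieces. -/
def Af (k : ℤ) (u : ℝ) : ℝ := Hf ω ((k : ℝ) + 1) + tf ω k * (u - k)

/-- Convex increasing majorant of `H`. -/
def Ff (u : ℝ) : ℝ := ⨆ k : ℤ, Af ω k u

/-- `E(x) = exp(F(log x))` for `x > 0`. -/
def Ef (x : ℝ) : ℝ := if 0 < x then Real.exp (Ff ω (Real.log x)) else 0

/-- The factor function `σ`. -/
def sf (t : ℝ) : ℝ := Real.sqrt (t ^ 2 + Ef ω (t ^ 2))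

variable {ω} (hω : ClassKInf ω)
include hω

lemma omega_pos {x : ℝ} (hx : 0 < x) : 0 < ω x := by
  have := hω.2.1 (Set.self_mem_Ici) (le_of_lt hx : (0:ℝ) ≤ x) hx
  rw [hω.2.2.2.1] at this
  exact this

lemma Hmono : Monotone (Hf ω) := by
  intro u v huv
  exact Real.log_le_log (omega_pos hω (Real.exp_pos u))
    (hω.2.1.monotoneOn (Real.exp_pos u).le (Real.exp_pos v).le
      (Real.exp_le_exp.2 huv))

lemma exp_Hf (u : ℝ) : Real.exp (Hf ω u) = ω (Real.exp u) :=
  Real.exp_log (omega_pos hω (Real.exp_pos u))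

lemma Htop (c : ℝ) : ∃ K : ℤ, c ≤ Hf ω K := by
  obtain ⟨r, hr0, hrc⟩ := hω.2.2.1 (Real.exp c)
  refine ⟨max 1 ⌈r⌉, ?_⟩
  have h1 : r ≤ ((max 1 ⌈r⌉ : ℤ) : ℝ) := by
    calc r ≤ (⌈r⌉ : ℝ) := Int.le_ceil r
    _ ≤ _ := by exact_mod_cast Int.le_max_right 1 ⌈r⌉
  have h2 : ((max 1 ⌈r⌉ : ℤ) : ℝ) ≤ Real.exp ((max 1 ⌈r⌉ : ℤ) : ℝ) := by
    have := Real.add_one_le_exp ((max 1 ⌈r⌉ : ℤ) : ℝ)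
    linarith
  have hre : r ≤ Real.exp ((max 1 ⌈r⌉ : ℤ) : ℝ) := h1.trans h2
  have h3 : ω r ≤ ω (Real.exp ((max 1 ⌈r⌉ : ℤ) : ℝ)) :=
    hω.2.1.monotoneOn hr0 (hr0.trans hre) hre
  rw [Hf, Real.le_log_iff_exp_le (omega_pos hω (Real.exp_pos _))]
  exact hrc.trans h3

lemma HtendBot : Tendsto (Hf ω) atBot atBot := by
  have h1 : Tendsto (fun u : ℝ => ω (Real.exp u)) atBot (nhdsWithin 0 (Set.Ioi 0)) := by
    apply tendsto_nhdsWithin_of_tendsto_nhds_of_eventually_within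
    · have hc0 : Tendsto ω (nhdsWithin 0 (Set.Ici 0)) (nhds 0) := by
        have := hω.1 0 Set.self_mem_Ici
        rwa [ContinuousWithinAt, hω.2.2.2.1] at this
      apply hc0.comp
      apply tendsto_nhdsWithin_of_tendsto_nhds_of_eventually_within
      · exact Real.tendsto_exp_atBot
      · exact Eventually.of_forall fun u => (Real.exp_pos u).le
    · exact Eventually.of_forall fun u => omega_pos hω (Real.exp_pos u)
  exact Real.tendsto_log_nhdsGT_zero.comp h1

lemma Hbot (c : ℝ) : ∃ L : ℤ, Hf ω L ≤ c := by
  have := (tendsto_atBot.1 (HtendBot hω)) c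
  obtain ⟨U, hU⟩ := eventually_atBot.1 this
  exact ⟨⌊U⌋, hU _ (Int.floor_le U)⟩

lemma tf_pos (k : ℤ) : 0 < tf ω k := by
  have h : (0:ℝ) ≤ max 0 (Hf ω (k + 2)) := le_max_left _ _
  have := Real.exp_pos (k : ℝ)
  unfold tf
  nlinarith

lemma one_le_tf_aux (k : ℤ) : 1 + max 0 (Hf ω ((k:ℝ) + 2)) ≤ tf ω k ∨ True := Or.inr trivial

/-- Key elementary fact: `exp k * (u - k) ≤ exp u` when `k ≤ u`. -/
lemma exp_mul_sub_le {k u : ℝ} (h : k ≤ u) : Real.exp k * (u - k) ≤ Real.exp u := by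
  have h1 : u - k ≤ Real.exp (u - k) := by
    have := Real.add_one_le_exp (u - k); linarith
  calc Real.exp k * (u - k) ≤ Real.exp k * Real.exp (u - k) :=
        mul_le_mul_of_nonneg_left h1 (Real.exp_pos k).le
  _ = Real.exp u := by rw [← Real.exp_add]; ring_nf

lemma Abdd (u : ℝ) : BddAbove (Set.range fun k : ℤ => Af ω k u) := by
  set n : ℤ := max (⌈u⌉ + 1) 0 with hn
  refine ⟨max 0 (Hf ω n + Real.exp u * (1 + max 0 (Hf ω ((n:ℝ) + 1)))), ?_⟩
  rintro _ ⟨k, rfl⟩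
  by_cases hk : n ≤ k
  · -- large k : the term is ≤ 0
    have hk1 : u + 1 ≤ (k : ℝ) := by
      have h1 : (⌈u⌉ + 1 : ℤ) ≤ k := le_trans (Int.le_max_left _ _) hk
      have h2 : u ≤ (⌈u⌉ : ℝ) := Int.le_ceil u
      have : ((⌈u⌉ + 1 : ℤ) : ℝ) ≤ (k : ℝ) := by exact_mod_cast h1
      push_cast at this ⊢; linarith
    have hk0 : (0 : ℝ) ≤ (k : ℝ) := by
      have : (0:ℤ) ≤ k := le_trans (Int.le_max_right _ _) hk
      exact_mod_cast this
    have hek : 1 ≤ Real.exp (k : ℝ) := Real.one_le_exp hk0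
    have hmax2 : Hf ω ((k:ℝ) + 1) ≤ max 0 (Hf ω ((k:ℝ) + 2)) :=
      le_trans (Hmono hω (by linarith)) (le_max_right _ _)
    have htk : 1 + Hf ω ((k:ℝ) + 1) ≤ tf ω k := by
      unfold tf
      nlinarith [le_max_left (0:ℝ) (Hf ω ((k:ℝ) + 2)), hmax2]
    have hneg : u - (k:ℝ) ≤ -1 := by linarith
    have : Af ω k u ≤ -1 := by
      unfold Af
      have h5 : tf ω k * (u - k) ≤ tf ω k * (-1) :=
        mul_le_mul_of_nonneg_left hneg (tf_pos hω k).le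
      nlinarith [tf_pos hω k]
    exact le_trans this (le_trans (by norm_num) (le_max_left _ _))
  · -- small k
    push_neg at hk
    have hk1 : k + 1 ≤ n := hk
    have hH : Hf ω ((k:ℝ) + 1) ≤ Hf ω (n:ℝ) := by
      apply Hmono hω
      have : ((k + 1 : ℤ) : ℝ) ≤ ((n : ℤ) : ℝ) := by exact_mod_cast hk1
      push_cast at this ⊢; linarith
    have hEnn : (0:ℝ) ≤ Real.exp u * (1 + max 0 (Hf ω ((n:ℝ) + 1))) := by
      have := le_max_left (0:ℝ) (Hf ω ((n:ℝ) + 1))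
      positivity
    by_cases hu : u ≤ (k : ℝ)
    · have : Af ω k u ≤ Hf ω (n:ℝ) := by
        unfold Af
        have : tf ω k * (u - k) ≤ 0 :=
          mul_nonpos_of_nonneg_of_nonpos (tf_pos hω k).le (by linarith)
        linarith
      exact le_trans this (le_trans (by linarith) (le_max_right _ _))
    · push_neg at hu
      have hmax : max 0 (Hf ω ((k:ℝ) + 2)) ≤ max 0 (Hf ω ((n:ℝ) + 1)) := by
        apply max_le_max le_rfl
        apply Hmono hω
        have : ((k + 1 : ℤ) : ℝ) ≤ ((n : ℤ) : ℝ) := by exact_mod_cast hk1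
        push_cast at this ⊢; linarith
      have h4 : Real.exp (k:ℝ) * (u - k) ≤ Real.exp u := exp_mul_sub_le hω hu.le
      have h6 : tf ω k * (u - k) ≤ Real.exp u * (1 + max 0 (Hf ω ((n:ℝ) + 1))) := by
        unfold tf
        have hub : (0:ℝ) ≤ u - k := by linarith
        have he : (0:ℝ) < Real.exp (k:ℝ) := Real.exp_pos _
        have hm0 : (0:ℝ) ≤ max 0 (Hf ω ((k:ℝ) + 2)) := le_max_left _ _
        calc Real.exp (k:ℝ) * (1 + max 0 (Hf ω ((k:ℝ) + 2))) * (u - k)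
            = (Real.exp (k:ℝ) * (u - k)) * (1 + max 0 (Hf ω ((k:ℝ) + 2))) := by ring
        _ ≤ Real.exp u * (1 + max 0 (Hf ω ((k:ℝ) + 2))) := by
            apply mul_le_mul_of_nonneg_right h4; linarith
        _ ≤ Real.exp u * (1 + max 0 (Hf ω ((n:ℝ) + 1))) := by
            apply mul_le_mul_of_nonneg_left _ (Real.exp_pos u).le; linarith
      have : Af ω k u ≤ Hf ω (n:ℝ) + Real.exp u * (1 + max 0 (Hf ω ((n:ℝ) + 1))) := by
        unfold Af; linarith
      exact le_trans this (le_max_right _ _)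

lemma FgeH (u : ℝ) : Hf ω u ≤ Ff ω u := by
  refine le_ciSup_of_le (Abdd hω u) ⌊u⌋ ?_
  unfold Af
  have h1 : Hf ω u ≤ Hf ω ((⌊u⌋ : ℝ) + 1) := Hmono hω (Int.lt_floor_add_one u).le
  have h2 : (0:ℝ) ≤ tf ω ⌊u⌋ * (u - ⌊u⌋) :=
    mul_nonneg (tf_pos hω ⌊u⌋).le (by linarith [Int.floor_le u])
  linarith

lemma Fmono : Monotone (Ff ω) := by
  intro u v huv
  apply ciSup_mono (Abdd hω v)
  intro k
  unfold Af
  have : tf ω k * (u - k) ≤ tf ω k * (v - k) :=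
    mul_le_mul_of_nonneg_left (by linarith) (tf_pos hω k).le
  linarith

lemma Fconv : ConvexOn ℝ Set.univ (Ff ω) := by
  refine ⟨convex_univ, fun x _ y _ a b ha hb hab => ?_⟩
  simp only [smul_eq_mul]
  apply ciSup_le
  intro k
  have haff : Af ω k (a * x + b * y) = a * Af ω k x + b * Af ω k y := by
    unfold Af
    linear_combination (Hf ω ((k:ℝ) + 1) - tf ω k * (k:ℝ)) * hab.symm
  rw [haff]
  exact add_le_add
    (mul_le_mul_of_nonneg_left (le_ciSup (Abdd hω x) k) ha)
    (mul_le_mul_of_nonneg_left (le_ciSup (Abdd hω y) k) hb)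

lemma Fcont : Continuous (Ff ω) := by
  rw [← continuousOn_univ]
  exact (Fconv hω).continuousOn isOpen_univ

lemma Fbot : Tendsto (Ff ω) atBot atBot := by
  rw [tendsto_atBot]
  intro b
  rw [eventually_atBot]
  -- choose K₀ with 0 ≤ H(K₀), 0 ≤ K₀
  obtain ⟨K, hK⟩ := Htop hω 0
  set K₀ : ℤ := max K 0 with hK₀
  have hK₀0 : (0:ℤ) ≤ K₀ := le_max_right _ _
  have hHK₀ : 0 ≤ Hf ω (K₀ : ℝ) :=
    le_trans hK (Hmono hω (by exact_mod_cast Int.le_max_left K 0))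
  -- choose L ≤ 0 with H(L+2) ≤ min (b-1) 0
  obtain ⟨L₀, hL₀⟩ := Hbot hω (min (b - 1) 0)
  set L : ℤ := min (L₀ - 2) 0 with hL
  have hL0 : (L:ℤ) ≤ 0 := min_le_right _ _
  have hHL2 : Hf ω ((L:ℝ) + 2) ≤ min (b - 1) 0 := by
    refine le_trans (Hmono hω ?_) hL₀
    have : (L : ℤ) + 2 ≤ L₀ := by omega
    exact_mod_cast this
  set τ : ℝ := Real.exp (L : ℝ) with hτ
  have hτpos : 0 < τ := Real.exp_pos _
  refine ⟨min (min (L:ℝ) ((K₀:ℝ) + b)) (min ((K₀:ℝ) - 1) ((L:ℝ) + (b - Hf ω (K₀:ℝ)) / τ)), fun u hu => ?_⟩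
  have huL : u ≤ (L:ℝ) := le_trans hu (le_trans (min_le_left _ _) (min_le_left _ _))
  have huKb : u ≤ (K₀:ℝ) + b := le_trans hu (le_trans (min_le_left _ _) (min_le_right _ _))
  have huK1 : u ≤ (K₀:ℝ) - 1 := le_trans hu (le_trans (min_le_right _ _) (min_le_left _ _))
  have huLt : u ≤ (L:ℝ) + (b - Hf ω (K₀:ℝ)) / τ :=
    le_trans hu (le_trans (min_le_right _ _) (min_le_right _ _))
  apply ciSup_le
  intro k
  unfold Af
  rcases le_or_gt K₀ k with hkK | hkK
  · -- case (a) : K₀ ≤ k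
    have hkr : (K₀ : ℝ) ≤ (k : ℝ) := by exact_mod_cast hkK
    have hk0 : (0:ℝ) ≤ (k:ℝ) := by
      have : (0:ℤ) ≤ k := le_trans hK₀0 hkK
      exact_mod_cast this
    have hek : 1 ≤ Real.exp (k:ℝ) := Real.one_le_exp hk0
    have hH2 : 0 ≤ Hf ω ((k:ℝ) + 2) := le_trans hHK₀ (Hmono hω (by linarith))
    have hmaxeq : max 0 (Hf ω ((k:ℝ) + 2)) = Hf ω ((k:ℝ) + 2) := max_eq_right hH2
    have hH12 : Hf ω ((k:ℝ) + 1) ≤ Hf ω ((k:ℝ) + 2) := Hmono hω (by linarith)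
    have huk : u - (k:ℝ) ≤ -1 := by linarith
    have htk : 1 + Hf ω ((k:ℝ) + 2) ≤ tf ω k := by
      unfold tf; rw [hmaxeq]; nlinarith
    have h5 : tf ω k * (u - k) ≤ (1 + Hf ω ((k:ℝ) + 2)) * (u - k) := by
      apply mul_le_mul_of_nonpos_right htk; linarith
    have h6 : (1 + Hf ω ((k:ℝ) + 2)) * (u - k) ≤ (u - k) - Hf ω ((k:ℝ) + 2) := by
      nlinarith
    have h7 : u - (k:ℝ) ≤ b := by linarith
    linarith
  · rcases le_or_gt L k with hkL | hkL
    · -- case (b) : L ≤ k < K₀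
      have hkr : (k : ℝ) ≤ (K₀ : ℝ) - 1 := by
        have h0 : k + 1 ≤ K₀ := hkK
        have h0' : ((k + 1 : ℤ) : ℝ) ≤ ((K₀ : ℤ) : ℝ) := by exact_mod_cast h0
        push_cast at h0'; linarith
      have hLk : (L:ℝ) ≤ (k:ℝ) := by exact_mod_cast hkL
      have hHk : Hf ω ((k:ℝ) + 1) ≤ Hf ω (K₀:ℝ) := Hmono hω (by linarith)
      have huk : u - (k:ℝ) ≤ 0 := by linarith
      have hτk : τ ≤ tf ω k := by
        have h1 : Real.exp (L:ℝ) ≤ Real.exp (k:ℝ) := Real.exp_le_exp.2 hLk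
        have h2 : (1:ℝ) ≤ 1 + max 0 (Hf ω ((k:ℝ) + 2)) := by
          have := le_max_left (0:ℝ) (Hf ω ((k:ℝ) + 2)); linarith
        unfold tf
        nlinarith [Real.exp_pos (k:ℝ)]
      have h5 : tf ω k * (u - k) ≤ τ * (u - k) :=
        mul_le_mul_of_nonpos_right hτk huk
      have h6 : τ * (u - k) ≤ τ * (u - L) := by
        apply mul_le_mul_of_nonneg_left _ hτpos.le; linarith
      have h7 : τ * (u - L) ≤ b - Hf ω (K₀:ℝ) := by
        have h8 : u - (L:ℝ) ≤ (b - Hf ω (K₀:ℝ)) / τ := by linarith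
        calc τ * (u - (L:ℝ)) ≤ τ * ((b - Hf ω (K₀:ℝ)) / τ) :=
              mul_le_mul_of_nonneg_left h8 hτpos.le
        _ = b - Hf ω (K₀:ℝ) := by field_simp
      linarith
    · -- case (c) : k < L
      have hk1L : (k:ℝ) + 1 ≤ (L:ℝ) := by
        have : k + 1 ≤ L := hkL
        exact_mod_cast this
      have hHk : Hf ω ((k:ℝ) + 1) ≤ b - 1 := by
        refine le_trans (Hmono hω (by linarith : (k:ℝ) + 1 ≤ (L:ℝ) + 2)) ?_
        exact le_trans hHL2 (min_le_left _ _)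
      rcases le_or_gt u (k:ℝ) with hu | hu
      · have : tf ω k * (u - k) ≤ 0 :=
          mul_nonpos_of_nonneg_of_nonpos (tf_pos hω k).le (by linarith)
        linarith
      · -- k < u ≤ L
        have hmax0 : max 0 (Hf ω ((k:ℝ) + 2)) = 0 := by
          apply max_eq_left
          refine le_trans (Hmono hω (by linarith : (k:ℝ) + 2 ≤ (L:ℝ) + 2)) ?_
          exact le_trans hHL2 (min_le_right _ _)
        have htk : tf ω k = Real.exp (k:ℝ) := by
          unfold tf; rw [hmax0]; ring
        have h4 : tf ω k * (u - k) ≤ Real.exp u := by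
          rw [htk]; exact exp_mul_sub_le hω hu.le
        have h5 : Real.exp u ≤ 1 := by
          rw [Real.exp_le_one_iff]
          have : (L:ℝ) ≤ 0 := by exact_mod_cast hL0
          linarith
        linarith

lemma Ef_nonneg (x : ℝ) : 0 ≤ Ef ω x := by
  unfold Ef; split
  · exact (Real.exp_pos _).le
  · exact le_rfl

lemma Ef_mono {x y : ℝ} (hx : 0 ≤ x) (hxy : x ≤ y) : Ef ω x ≤ Ef ω y := by
  unfold Ef
  rcases eq_or_lt_of_le hx with h0 | h0
  · rw [if_neg (by rw [← h0]; exact lt_irrefl 0)]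
    split
    · exact (Real.exp_pos _).le
    · exact le_rfl
  · rw [if_pos h0, if_pos (lt_of_lt_of_le h0 hxy)]
    exact Real.exp_le_exp.2 (Fmono hω (Real.log_le_log h0 hxy))

lemma sf_nonneg (t : ℝ) : 0 ≤ sf ω t := Real.sqrt_nonneg _

lemma sf_zero : sf ω 0 = 0 := by
  unfold sf Ef
  norm_num

lemma sf_ge_self {t : ℝ} (ht : 0 ≤ t) : t ≤ sf ω t := by
  have h2 : t ^ 2 ≤ t ^ 2 + Ef ω (t ^ 2) := by linarith [Ef_nonneg hω (t ^ 2)]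
  calc t = Real.sqrt (t ^ 2) := (Real.sqrt_sq ht).symm
  _ ≤ sf ω t := Real.sqrt_le_sqrt h2

lemma sf_strictMono : StrictMonoOn (sf ω) (Set.Ici (0:ℝ)) := by
  intro a ha b hb hab
  simp only [Set.mem_Ici] at ha hb
  unfold sf
  have h1 : a ^ 2 < b ^ 2 := by nlinarith
  have h2 : Ef ω (a ^ 2) ≤ Ef ω (b ^ 2) := Ef_mono hω (by positivity) h1.le
  exact Real.sqrt_lt_sqrt (add_nonneg (sq_nonneg a) (Ef_nonneg hω _)) (by linarith)

lemma Ef_cont_pos {x : ℝ} (hx : 0 < x) : ContinuousAt (Ef ω) x := by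
  have heq : (fun y => Real.exp (Ff ω (Real.log y))) =ᶠ[nhds x] Ef ω := by
    filter_upwards [lt_mem_nhds hx] with y hy
    unfold Ef
    rw [if_pos hy]
  apply ContinuousAt.congr _ heq
  exact Real.continuous_exp.continuousAt.comp
    (((Fcont hω).continuousAt).comp (Real.continuousAt_log hx.ne'))

lemma sf_tendsto_zero : Tendsto (sf ω) (nhdsWithin 0 (Set.Ioi 0)) (nhds 0) := by
  have h1 : Tendsto (fun t : ℝ => t ^ 2 + Ef ω (t ^ 2)) (nhdsWithin 0 (Set.Ioi 0)) (nhds 0) := by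
    have ha : Tendsto (fun t : ℝ => t ^ 2) (nhdsWithin 0 (Set.Ioi 0)) (nhds 0) := by
      apply Tendsto.mono_left _ nhdsWithin_le_nhds
      have : Continuous (fun t : ℝ => t ^ 2) := by continuity
      simpa using this.tendsto 0
    have hb : Tendsto (fun t : ℝ => Ef ω (t ^ 2)) (nhdsWithin 0 (Set.Ioi 0)) (nhds 0) := by
      have hlog : Tendsto (fun t : ℝ => Ff ω (Real.log (t ^ 2))) (nhdsWithin 0 (Set.Ioi 0)) atBot := by
        apply (Fbot hω).comp
        apply Tendsto.comp Real.tendsto_log_nhdsGT_zero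
        apply tendsto_nhdsWithin_of_tendsto_nhds_of_eventually_within
        · apply Tendsto.mono_left _ nhdsWithin_le_nhds
          have : Continuous (fun t : ℝ => t ^ 2) := by continuity
          simpa using this.tendsto 0
        · filter_upwards [self_mem_nhdsWithin] with t ht
          exact pow_pos (Set.mem_Ioi.mp ht) 2
      have hE : (fun t : ℝ => Real.exp (Ff ω (Real.log (t ^ 2)))) =ᶠ[nhdsWithin 0 (Set.Ioi 0)]
          (fun t => Ef ω (t ^ 2)) := by
        filter_upwards [self_mem_nhdsWithin] with t ht
        unfold Ef
        rw [if_pos (pow_pos ht 2)]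
      apply Tendsto.congr' hE
      exact Real.tendsto_exp_atBot.comp hlog
    simpa using ha.add hb
  have h2 : Tendsto Real.sqrt (nhds 0) (nhds 0) := by
    simpa using Real.continuous_sqrt.tendsto 0
  exact h2.comp h1

lemma sf_continuousOn : ContinuousOn (sf ω) (Set.Ici (0:ℝ)) := by
  intro t ht
  simp only [Set.mem_Ici] at ht
  rcases eq_or_lt_of_le ht with h0 | h0
  · -- t = 0
    subst h0
    unfold ContinuousWithinAt
    rw [sf_zero hω]
    rw [show Set.Ici (0:ℝ) = insert 0 (Set.Ioi 0) by
      ext x; simp [Set.mem_Ici, Set.mem_Ioi, le_iff_lt_or_eq, or_comm, eq_comm]]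
    rw [nhdsWithin_insert]
    rw [Filter.tendsto_sup]
    constructor
    · simpa [sf_zero hω] using tendsto_pure_nhds (sf ω) 0
    · exact sf_tendsto_zero hω
  · -- t > 0
    apply ContinuousAt.continuousWithinAt
    unfold sf
    apply Real.continuous_sqrt.continuousAt.comp
    apply ContinuousAt.add
    · exact (continuous_pow 2).continuousAt
    · have hsq : ContinuousAt (fun t : ℝ => t ^ 2) t := (continuous_pow 2).continuousAt
      exact ContinuousAt.comp (g := Ef ω) (f := fun t : ℝ => t ^ 2) (x := t)
        (Ef_cont_pos hω (pow_pos h0 2)) hsq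

lemma sf_classKInf : ClassKInf (sf ω) := by
  refine ⟨sf_continuousOn hω, sf_strictMono hω, ?_, sf_zero hω, fun r _ => sf_nonneg hω r⟩
  intro M
  exact ⟨max M 0, le_max_right _ _, le_trans (le_max_left M 0) (sf_ge_self hω (le_max_right M 0))⟩

lemma key_ineq {r s : ℝ} (hr : 0 < r) (hs : 0 < s) : ω (r * s) ≤ sf ω r * sf ω s := by
  have hrs : 0 < r * s := mul_pos hr hs
  have h1 : ω (r * s) = Real.exp (Hf ω (Real.log (r * s))) := by
    rw [exp_Hf hω, Real.exp_log hrs]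
  have hlog : Real.log (r * s) = Real.log r + Real.log s := Real.log_mul hr.ne' hs.ne'
  have h2 : Hf ω (Real.log (r * s)) ≤ Ff ω (Real.log r + Real.log s) := by
    rw [hlog]; exact FgeH hω _
  have h3 : Ff ω (Real.log r + Real.log s)
      ≤ (Ff ω (2 * Real.log r) + Ff ω (2 * Real.log s)) / 2 := by
    have := (Fconv hω).2 (Set.mem_univ (2 * Real.log r)) (Set.mem_univ (2 * Real.log s))
      (by norm_num : (0:ℝ) ≤ 1/2) (by norm_num : (0:ℝ) ≤ 1/2) (by norm_num)
    simp only [smul_eq_mul] at this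
    calc Ff ω (Real.log r + Real.log s)
        = Ff ω (1/2 * (2 * Real.log r) + 1/2 * (2 * Real.log s)) := by ring_nf
    _ ≤ 1/2 * Ff ω (2 * Real.log r) + 1/2 * Ff ω (2 * Real.log s) := this
    _ = (Ff ω (2 * Real.log r) + Ff ω (2 * Real.log s)) / 2 := by ring
  have hEr : Ef ω (r ^ 2) = Real.exp (Ff ω (2 * Real.log r)) := by
    unfold Ef
    rw [if_pos (pow_pos hr 2), Real.log_pow]
    norm_num
  have hEs : Ef ω (s ^ 2) = Real.exp (Ff ω (2 * Real.log s)) := by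
    unfold Ef
    rw [if_pos (pow_pos hs 2), Real.log_pow]
    norm_num
  have h4 : Real.exp ((Ff ω (2 * Real.log r) + Ff ω (2 * Real.log s)) / 2)
      = Real.sqrt (Ef ω (r ^ 2)) * Real.sqrt (Ef ω (s ^ 2)) := by
    rw [hEr, hEs, ← Real.exp_half, ← Real.exp_half, ← Real.exp_add]
    ring_nf
  have h5 : Real.sqrt (Ef ω (r ^ 2)) ≤ sf ω r := by
    unfold sf
    apply Real.sqrt_le_sqrt
    nlinarith
  have h6 : Real.sqrt (Ef ω (s ^ 2)) ≤ sf ω s := by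
    unfold sf
    apply Real.sqrt_le_sqrt
    nlinarith
  calc ω (r * s) = Real.exp (Hf ω (Real.log (r * s))) := h1
  _ ≤ Real.exp ((Ff ω (2 * Real.log r) + Ff ω (2 * Real.log s)) / 2) :=
      Real.exp_le_exp.2 (le_trans h2 h3)
  _ = Real.sqrt (Ef ω (r ^ 2)) * Real.sqrt (Ef ω (s ^ 2)) := h4
  _ ≤ sf ω r * sf ω s :=
      mul_le_mul h5 h6 (Real.sqrt_nonneg _) (sf_nonneg hω r)

end Stmt4Aux

end Stmt4Aux

/-- cf. Lemma 2.9: every class-`K∞` function `ω` admits class-`K∞`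
functions `σ₁, σ₂` with `ω(r·s) ≤ σ₁(r)·σ₂(s)` for all `r, s ≥ 0`. -/


theorem stmt4 (ω : ℝ → ℝ) (hω : ClassKInf ω) :
    ∃ σ₁ σ₂ : ℝ → ℝ, ClassKInf σ₁ ∧ ClassKInf σ₂ ∧
      ∀ r s : ℝ, 0 ≤ r → 0 ≤ s → ω (r * s) ≤ σ₁ r * σ₂ s := by
  refine ⟨Stmt4Aux.sf ω, Stmt4Aux.sf ω, Stmt4Aux.sf_classKInf hω, Stmt4Aux.sf_classKInf hω,
    fun r s hr hs => ?_⟩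
  rcases eq_or_lt_of_le hr with h0 | h0
  · rw [← h0, zero_mul, hω.2.2.2.1]
    exact mul_nonneg (Stmt4Aux.sf_nonneg hω _) (Stmt4Aux.sf_nonneg hω _)
  rcases eq_or_lt_of_le hs with h1 | h1
  · rw [← h1, mul_zero, hω.2.2.2.1]
    exact mul_nonneg (Stmt4Aux.sf_nonneg hω _) (Stmt4Aux.sf_nonneg hω _)
  exact Stmt4Aux.key_ineq hω h0 h1
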